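/- Let q be a prime power, δ ∈ F_{q²} \ F_q with monic minimal polynomial x² − bx − c over F_q, and let u, v, w, z ∈ F_q with z ≠ 0 and uz − vw ≠ 0 and w + zδ ≠ 0. For an integer i ≥ 2, define a₀ = Σ_{j=0}^{⌊(i−2)/2⌋} C(i−2−j, j) b^{i−2−2j} c^{j+1} and a₁ = Σ_{j=0}^{⌊(i−1)/2⌋} C(i−1−j, j) b^{i−1−2j} c^{j}. Then δ^i = (u + vδ)/(w + zδ) if and only if a₁ ≠ 0, b = −a₀/a₁ + v/(z·a₁) − w/z, and c = −(w·a₀)/(z·a₁) + u/(z·a₁). -/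

import Mathlib

open Polynomial

/-- The pair-distance between two vectors indexed by `ZMod n`,
with indices taken modulo `n`. -/
def pairDist {n : ℕ} [NeZero n] {α : Type*} [DecidableEq α] (u v : ZMod n → α) : ℕ :=
  (Finset.univ.filter fun i : ZMod n => (u i, u (i + 1)) ≠ (v i, v (i + 1))).card

/-- A finite subset of `ZMod n` consisting of (at least one) cyclically consecutive elements. -/
def IsArc {n : ℕ} (T : Finset (ZMod n)) : Prop :=
  ∃ (a : ZMod n) (k : ℕ), 0 < k ∧ T = (Finset.range k).image fun j : ℕ => a + (j : ZMod n)

/-- `L(S)`: the minimal number of parts in a partition of `S` into nonempty sets of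
cyclically consecutive elements of `ZMod n`. -/
noncomputable def cycL {n : ℕ} (S : Finset (ZMod n)) : ℕ :=
  sInf {m | ∃ P : Finset (Finset (ZMod n)), P.card = m ∧ (∀ T ∈ P, IsArc T) ∧
    (↑P : Set (Finset (ZMod n))).PairwiseDisjoint id ∧ P.sup id = S}

/-- The polynomial `∑ i, c i * x^i` associated to a vector `c` of length `n`. -/
noncomputable def polyOf {n : ℕ} [NeZero n] {F : Type*} [Semiring F] (c : ZMod n → F) :
    Polynomial F :=
  ∑ i : ZMod n, Polynomial.C (c i) * Polynomial.X ^ i.val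

/-- `d` is the minimum pair-distance of the code `Code`. -/
def IsMinPairDist {n : ℕ} [NeZero n] {α : Type*} [DecidableEq α]
    (Code : Set (ZMod n → α)) (d : ℕ) : Prop :=
  (∀ u ∈ Code, ∀ v ∈ Code, u ≠ v → d ≤ pairDist u v) ∧
    ∃ u ∈ Code, ∃ v ∈ Code, u ≠ v ∧ pairDist u v = d

/-- The coefficient `a₀(i) = ∑_{j=0}^{⌊(i−2)/2⌋} C(i−2−j, j) b^{i−2−2j} c^{j+1}`. -/
noncomputable def aCoeff0 {F : Type*} [Field F] (b c : F) (i : ℕ) : F :=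
  ∑ j ∈ Finset.range ((i - 2) / 2 + 1),
    ((i - 2 - j).choose j : F) * b ^ (i - 2 - 2 * j) * c ^ (j + 1)

/-- The coefficient `a₁(i) = ∑_{j=0}^{⌊(i−1)/2⌋} C(i−1−j, j) b^{i−1−2j} c^{j}`. -/
noncomputable def aCoeff1 {F : Type*} [Field F] (b c : F) (i : ℕ) : F :=
  ∑ j ∈ Finset.range ((i - 1) / 2 + 1),
    ((i - 1 - j).choose j : F) * b ^ (i - 1 - 2 * j) * c ^ j

/-- Auxiliary sequence: `S(n) = ∑_{j} C(n−j, j) b^{n−2j} c^j` (Fibonacci-like polynomial). -/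
noncomputable def Sb {F : Type*} [Field F] (b c : F) (n : ℕ) : F :=
  ∑ j ∈ Finset.range (n + 1), ((n - j).choose j : F) * b ^ (n - 2 * j) * c ^ j

lemma Sb_eq {F : Type*} [Field F] (b c : F) (n : ℕ) :
    Sb b c n
      = ∑ j ∈ Finset.range (n / 2 + 1), ((n - j).choose j : F) * b ^ (n - 2 * j) * c ^ j := by
  rw [Sb]
  refine (Finset.sum_subset ?_ ?_).symm
  · intro x hx
    simp only [Finset.mem_range] at *
    omega
  · intro x hx hx'
    simp only [Finset.mem_range] at *
    have : (n - x).choose x = 0 := Nat.choose_eq_zero_of_lt (by omega)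
    simp [this]

lemma Sb_zero {F : Type*} [Field F] (b c : F) : Sb b c 0 = 1 := by simp [Sb]

lemma Sb_one {F : Type*} [Field F] (b c : F) : Sb b c 1 = b := by
  simp [Sb, Finset.sum_range_succ]

lemma Srec {F : Type*} [Field F] (b c : F) (n : ℕ) :
    Sb b c (n + 2) = b * Sb b c (n + 1) + c * Sb b c n := by
  have key : Sb b c (n + 2)
      = ∑ j ∈ Finset.range (n + 1),
          ((n + 2 - (j+1)).choose (j+1) : F) * b ^ (n + 2 - 2 * (j+1)) * c ^ (j+1)
        + b ^ (n + 2) := by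
    rw [Sb, Finset.sum_range_succ' _ (n + 2), Finset.sum_range_succ]
    have h0 : ((n + 2 - (n + 1 + 1)).choose (n + 1 + 1) : F) = 0 := by
      norm_num
    simp [h0]
  rw [key]
  have hterm : ∀ j ∈ Finset.range (n + 1),
      ((n + 2 - (j+1)).choose (j+1) : F) * b ^ (n + 2 - 2 * (j+1)) * c ^ (j+1)
        = ((n - j).choose (j+1) : F) * b ^ (n - 2 * j) * c ^ (j+1)
          + c * (((n - j).choose j : F) * b ^ (n - 2 * j) * c ^ j) := by
    intro j hj
    simp only [Finset.mem_range] at hj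
    have e1 : n + 2 - (j + 1) = (n - j) + 1 := by omega
    have e2 : n + 2 - 2 * (j + 1) = n - 2 * j := by omega
    rw [e1, e2, Nat.choose_succ_succ]
    push_cast
    ring
  rw [Finset.sum_congr rfl hterm, Finset.sum_add_distrib, ← Finset.mul_sum]
  have hb : ∑ j ∈ Finset.range (n + 1), ((n - j).choose (j+1) : F) * b ^ (n - 2 * j) * c ^ (j+1)
      + b ^ (n + 2) = b * Sb b c (n + 1) := by
    rw [Sb, Finset.sum_range_succ' _ (n + 1), mul_add, Finset.mul_sum]
    have : ∀ j ∈ Finset.range (n + 1),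
        ((n - j).choose (j+1) : F) * b ^ (n - 2 * j) * c ^ (j+1)
          = b * (((n + 1 - (j+1)).choose (j+1) : F) * b ^ (n + 1 - 2 * (j+1)) * c ^ (j+1)) := by
      intro j hj
      simp only [Finset.mem_range] at hj
      have e1 : n + 1 - (j + 1) = n - j := by omega
      rw [e1]
      by_cases h : 2 * j + 1 ≤ n
      · have e2 : n - 2 * j = (n + 1 - 2 * (j+1)) + 1 := by omega
        rw [e2, pow_succ]
        ring
      · have : (n - j).choose (j + 1) = 0 := Nat.choose_eq_zero_of_lt (by omega)
        simp [this]
    rw [Finset.sum_congr rfl this]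
    simp [mul_comm, pow_succ]
  rw [← hb]
  rw [Sb]
  ring

lemma pow_formula {F : Type*} [Field F] {b c x : F} (h : x ^ 2 = b * x + c) (n : ℕ) :
    x ^ (n + 2) = c * Sb b c n + Sb b c (n + 1) * x := by
  induction n using Nat.twoStepInduction with
  | zero => rw [Sb_zero, Sb_one, h]; ring
  | one =>
    have h3 : x ^ 3 = x ^ 2 * x := by ring
    rw [h3, h, Sb_one, show (1:ℕ)+1 = 0+2 from rfl, Srec, Sb_zero, Sb_one]
    linear_combination b * h
  | more n ih1 ih2 =>
    have h3 : x ^ (n + 2 + 2) = x ^ (n + 1 + 2) * x := by ring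
    have e1 : n + 1 + 1 = n + 2 := rfl
    have e2 : n + 2 + 1 = n + 1 + 2 := rfl
    rw [h3, ih2, e1, e2, Srec b c (n + 1), Srec b c n]
    linear_combination (b * Sb b c (n + 1) + c * Sb b c n) * h

lemma Sb_map {F E : Type*} [Field F] [Field E] (φ : F →+* E) (b c : F) (n : ℕ) :
    φ (Sb b c n) = Sb (φ b) (φ c) n := by
  simp [Sb, map_sum]


/-- for `δ ∈ F_{q²} \ F_q` with minimal polynomial `x² − bx − c`, and
`u,v,w,z ∈ F_q` with `z ≠ 0`, `uz − vw ≠ 0`, `w + zδ ≠ 0`, and an integer `i ≥ 2`: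
`δ^i = (u + vδ)/(w + zδ)` iff `a₁ ≠ 0`, `b = −a₀/a₁ + v/(z a₁) − w/z` and
`c = −(w a₀)/(z a₁) + u/(z a₁)`. -/
theorem stmt15 {q : ℕ} {F E : Type*} [Field F] [Fintype F] [Field E] [Fintype E] [Algebra F E]
    (hq : Fintype.card F = q) (hE : Fintype.card E = q ^ 2)
    {δ : E} (hδF : δ ∉ Set.range (algebraMap F E))
    {b c : F} (hmin : minpoly F δ = X ^ 2 - Polynomial.C b * X - Polynomial.C c)
    (u v w z : F) (hz : z ≠ 0) (hdet : u * z - v * w ≠ 0)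
    (hden : algebraMap F E w + algebraMap F E z * δ ≠ 0)
    (i : ℕ) (hi : 2 ≤ i) :
    δ ^ i = (algebraMap F E u + algebraMap F E v * δ) /
        (algebraMap F E w + algebraMap F E z * δ) ↔
      aCoeff1 b c i ≠ 0 ∧
        b = -aCoeff0 b c i / aCoeff1 b c i + v / (z * aCoeff1 b c i) - w / z ∧
        c = -(w * aCoeff0 b c i) / (z * aCoeff1 b c i) + u / (z * aCoeff1 b c i) := by
  set φ := algebraMap F E with hφ
  have hinj : Function.Injective φ := φ.injective
  have hδ2 : δ ^ 2 = φ b * δ + φ c := by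
    have h0 := minpoly.aeval F δ
    rw [hmin] at h0
    simp only [map_sub, map_mul, map_pow, aeval_X, aeval_C] at h0
    linear_combination h0
  have indep : ∀ x y : F, φ x + φ y * δ = 0 → x = 0 ∧ y = 0 := by
    intro x y hxy
    by_cases hy : y = 0
    · subst hy
      simp only [map_zero, zero_mul, add_zero] at hxy
      exact ⟨hinj (by simpa using hxy), rfl⟩
    · exfalso
      apply hδF
      refine ⟨-x / y, ?_⟩
      have hyE : φ y ≠ 0 := fun h => hy (hinj (by simpa using h))
      rw [map_div₀, map_neg]
      field_simp
      linear_combination -hxy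
  set a0 := aCoeff0 b c i with ha0def
  set a1 := aCoeff1 b c i with ha1def
  have ha0 : a0 = c * Sb b c (i - 2) := by
    rw [ha0def, aCoeff0, Sb_eq, Finset.mul_sum]
    exact Finset.sum_congr rfl fun j _ => by ring
  have ha1 : a1 = Sb b c (i - 1) := by rw [ha1def, aCoeff1, Sb_eq]
  have hpow : δ ^ i = φ a0 + φ a1 * δ := by
    have h1 : δ ^ (i - 2 + 2) = φ c * Sb (φ b) (φ c) (i - 2) + Sb (φ b) (φ c) (i - 2 + 1) * δ :=
      pow_formula hδ2 (i - 2)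
    have e1 : i - 2 + 2 = i := by omega
    have e2 : i - 2 + 1 = i - 1 := by omega
    rw [e1, e2] at h1
    rw [h1, ha0, ha1, map_mul, Sb_map, Sb_map]
  have key : δ ^ i = (φ u + φ v * δ) / (φ w + φ z * δ)
      ↔ (a0 * w + a1 * z * c - u = 0 ∧ a0 * z + a1 * w + a1 * z * b - v = 0) := by
    rw [eq_div_iff hden]
    constructor
    · intro h
      apply indep
      simp only [map_sub, map_add, map_mul]
      linear_combination h - hpow * (φ w + φ z * δ) - φ a1 * φ z * hδ2
    · intro ⟨h0, h1⟩
      have h0' := congrArg φ h0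
      have h1' := congrArg φ h1
      simp only [map_sub, map_add, map_mul, map_zero] at h0' h1'
      rw [hpow]
      linear_combination h0' + h1' * δ + φ a1 * φ z * hδ2
  rw [key]
  constructor
  · rintro ⟨h0, h1⟩
    have ha1ne : a1 ≠ 0 := by
      intro h
      rw [h] at h0 h1
      apply hdet
      linear_combination w * h1 - z * h0
    refine ⟨ha1ne, ?_, ?_⟩
    · field_simp
      linear_combination h1
    · field_simp
      linear_combination h0
  · rintro ⟨ha1ne, hb, hc⟩
    field_simp at hb hc
    have hza : z * a1 ≠ 0 := mul_ne_zero hz ha1ne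
    constructor
    · have hh : (z * a1) * (a0 * w + a1 * z * c - u) = 0 := by linear_combination z * a1 * hc
      exact (mul_eq_zero.mp hh).resolve_left hza
    · have hh : (z * a1) * (a0 * z + a1 * w + a1 * z * b - v) = 0 := by linear_combination z * a1 * hb
      exact (mul_eq_zero.mp hh).resolve_left hza
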